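/- For n > 3, let J_n = (x_1 x_{1+n} ··· x_{1+n²−n})(x_2 x_{2+n} ··· x_{2+n²−n})···(x_n x_{2n} ··· x_{n²}) and let U be any word of the same type as U_n = x_1 x_2 ··· x_{n²} · J_n · x_{n²} ··· x_2 x_1. Then for each pair of distinct indices 1 ≤ i ≠ j ≤ n², the two-letter word x_i x_j appears at most once as a factor of U. -/

import Mathlib

/-- Two words have the same type: equal up to changing the positive exponents of
their maximal single-letter blocks. -/
def SameType {α : Type*} (u v : List α) : Prop :=
  ∃ L : List (α × ℕ × ℕ),
    (∀ p ∈ L, 0 < p.2.1 ∧ 0 < p.2.2) ∧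
    List.Chain' (fun p q => p.1 ≠ q.1) L ∧
    u = L.flatMap (fun p => List.replicate p.2.1 p.1) ∧
    v = L.flatMap (fun p => List.replicate p.2.2 p.1)

/-- The height of a word: the number of islands (maximal one-letter power factors). -/
def height {α : Type*} [DecidableEq α] (u : List α) : ℕ :=
  (u.destutter (· ≠ ·)).length

/-- A monoid M satisfies the identity u ≈ v (words in countably many variables). -/
def SatM (M : Type*) [Monoid M] (u v : List ℕ) : Prop :=
  ∀ θ : ℕ → M, (u.map θ).prod = (v.map θ).prod

/-- Property (C_ℓ): every word over a two-letter alphabet {x,y} of height at most ℓ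
can form an identity of M only with a word of the same type. -/
def PropC (M : Type*) [Monoid M] (ℓ : ℕ) : Prop :=
  ∀ x y : ℕ, x ≠ y → ∀ u v : List ℕ, u ≠ [] → (∀ z ∈ u, z = x ∨ z = y) →
    height u ≤ ℓ → SatM M u v → SameType u v

/-- The Jackson word J_n = (x₁x_{1+n}⋯x_{1+n²−n})(x₂x_{2+n}⋯x_{2+n²−n})⋯(x_nx_{2n}⋯x_{n²}),
with the variable x_i encoded as the natural number i. -/
def Jword (n : ℕ) : List ℕ :=
  (List.range n).flatMap (fun i => (List.range n).map (fun j => i + 1 + j * n))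

/-- The word x₁x₂⋯x_{n²}. -/
def ascWord (n : ℕ) : List ℕ := (List.range (n ^ 2)).map (· + 1)

/-- The word U_n = x₁x₂⋯x_{n²} · J_n · x_{n²}⋯x₂x₁. -/
def Uword (n : ℕ) : List ℕ := ascWord n ++ Jword n ++ (ascWord n).reverse

namespace P17


def pl {α : Type*} : List α → List (α × α)
  | a :: b :: t => (a, b) :: pl (b :: t)
  | _ => []

@[simp] lemma pl_nil {α : Type*} : pl ([] : List α) = [] := rfl
@[simp] lemma pl_single {α : Type*} (a : α) : pl [a] = [] := rfl
@[simp] lemma pl_cons_cons {α : Type*} (a b : α) (t : List α) :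
    pl (a :: b :: t) = (a, b) :: pl (b :: t) := rfl

lemma pl_cons {α : Type*} (a : α) (w : List α) (hw : w ≠ []) :
    pl (a :: w) = (a, w.head hw) :: pl w := by
  cases w with
  | nil => simp at hw
  | cons b t => rfl

lemma pl_append_cons {α : Type*} (u : List α) (h : α) (t : List α) :
    pl (u ++ h :: t) = pl (u ++ [h]) ++ pl (h :: t) := by
  induction u with
  | nil => simp
  | cons a u ih =>
    cases u with
    | nil => simp
    | cons b u' =>
      simp only [List.cons_append, pl_cons_cons] at ih ⊢
      rw [ih]

lemma pl_snoc_prefix {α : Type*} (w : List α) (h : α) : pl w <+: pl (w ++ [h]) := by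
  induction w with
  | nil => simp
  | cons a w ih =>
    cases w with
    | nil => simp
    | cons b t =>
      simp only [List.cons_append, pl_cons_cons]
      exact List.cons_prefix_cons.mpr ⟨rfl, ih⟩

lemma pl_prefix {α : Type*} {w w' : List α} (h : w <+: w') : pl w <+: pl w' := by
  obtain ⟨r, rfl⟩ := h
  cases r with
  | nil => simp
  | cons h t =>
    rw [pl_append_cons]
    exact (pl_snoc_prefix w h).trans (List.prefix_append _ _)

lemma count_pl_replicate {α : Type*} [DecidableEq α] (x : α) (a : ℕ) {i j : α} (hij : i ≠ j) :
    (pl (List.replicate a x)).count (i, j) = 0 := by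
  induction a with
  | zero => simp
  | succ a ih =>
    cases a with
    | zero => simp [List.replicate_one]
    | succ a' =>
      rw [List.replicate_succ, List.replicate_succ, pl_cons_cons, List.count_cons]
      rw [List.replicate_succ] at ih
      have hne : ¬ ((i, j) = (x, x)) := by
        simp only [Prod.mk.injEq, not_and]
        exact fun h1 h2 => hij (h1.trans h2.symm)
      simp [ih, hne]
      intro h1 h2; exact hij (h1.symm.trans h2)

lemma count_pl_replicate_append {α : Type*} [DecidableEq α] (x : α) {a : ℕ} (ha : 0 < a)
    {w : List α} (hw : w ≠ []) {i j : α} (hij : i ≠ j) :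
    (pl (List.replicate a x ++ w)).count (i, j) =
      (if (i, j) = (x, w.head hw) then 1 else 0) + (pl w).count (i, j) := by
  induction a with
  | zero => omega
  | succ a ih =>
    cases a with
    | zero =>
      rw [List.replicate_one, List.singleton_append, pl_cons _ _ hw, List.count_cons]
      by_cases h : (i, j) = (x, w.head hw)
      · simp [h, Nat.add_comm]
      · simp [h]
        intro h1 h2; exact h (by rw [h1, h2])
    | succ a' =>
      have ha' : 0 < a' + 1 := Nat.succ_pos _
      rw [List.replicate_succ, List.cons_append]
      have hne : List.replicate (a' + 1) x ++ w ≠ [] := by simp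
      rw [pl_cons _ _ hne, List.count_cons]
      have hrep : List.replicate (a' + 1) x ≠ [] := by simp
      have hhead : (List.replicate (a' + 1) x ++ w).head hne = x := by
        rw [List.head_append_of_ne_nil hrep]
        cases a' <;> rfl
      have hcond : ¬ ((i, j) = (x, (List.replicate (a' + 1) x ++ w).head hne)) := by
        rw [hhead]
        simp only [Prod.mk.injEq, not_and]
        exact fun h1 h2 => hij (h1.trans h2.symm)
      rw [ih ha']
      simp [hcond]
      intro h1 h2; exact hij (h1.symm.trans h2)

lemma flat_ne_nil {α : Type*} (y : α) (b : ℕ) (hb : 0 < b) (L : List (α × ℕ)) :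
    ((y, b) :: L).flatMap (fun p => List.replicate p.2 p.1) ≠ [] := by
  intro h
  have := congrArg List.length h
  simp [List.length_flatMap] at this
  omega

lemma flat_head {α : Type*} (y : α) (b : ℕ) (hb : 0 < b) (L : List (α × ℕ)) (h) :
    (((y, b) :: L).flatMap (fun p => List.replicate p.2 p.1)).head h = y := by
  have hrep : List.replicate b y ≠ [] := by simp; omega
  simp only [List.flatMap_cons]
  rw [List.head_append_of_ne_nil hrep]
  obtain ⟨b', rfl⟩ : ∃ b', b = b' + 1 := ⟨b - 1, by omega⟩
  rfl

lemma count_flat {α : Type*} [DecidableEq α] (L : List (α × ℕ))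
    (hpos : ∀ p ∈ L, 0 < p.2) {i j : α} (hij : i ≠ j) :
    (pl (L.flatMap fun p => List.replicate p.2 p.1)).count (i, j) =
      (pl (L.map Prod.fst)).count (i, j) := by
  induction L with
  | nil => simp
  | cons p L ih =>
    obtain ⟨x, a⟩ := p
    have ha : 0 < a := hpos (x, a) (by simp)
    cases L with
    | nil =>
      simp only [List.flatMap_cons, List.flatMap_nil, List.append_nil, List.map_cons,
        List.map_nil, pl_single]
      rw [count_pl_replicate x a hij]
      simp
    | cons p' L' =>
      obtain ⟨y, b⟩ := p'
      have hb : 0 < b := hpos (y, b) (by simp)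
      have hw : ((y, b) :: L').flatMap (fun p => List.replicate p.2 p.1) ≠ [] :=
        flat_ne_nil y b hb L'
      rw [List.flatMap_cons, count_pl_replicate_append x ha hw hij]
      rw [ih (fun p hp => hpos p (by simp [hp]))]
      rw [flat_head y b hb L' hw]
      simp only [List.map_cons, pl_cons_cons, List.count_cons]
      by_cases h : (i, j) = (x, y)
      · simp [h, Nat.add_comm]
      · simp [h]
        intro h1 h2; exact h (by rw [h1, h2])



def NN (n : ℕ) : ℕ := n * n

lemma NN_def (n : ℕ) : NN n = n * n := rfl

lemma len_asc (n : ℕ) : (ascWord n).length = NN n := by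
  simp [ascWord, NN, pow_two]

lemma range_flatMap_map (f : ℕ → ℕ → ℕ) (a b : ℕ) :
    (List.range a).flatMap (fun i => (List.range b).map (f i)) =
      (List.range (a * b)).map (fun m => f (m / b) (m % b)) := by
  induction a with
  | zero => simp
  | succ a ih =>
    rw [List.range_succ, List.flatMap_append, ih, Nat.succ_mul, List.range_add,
      List.map_append, List.map_map]
    congr 1
    simp only [List.flatMap_cons, List.flatMap_nil, List.append_nil, List.map_map]
    apply List.map_congr_left
    intro x hx
    have hx' : x < b := List.mem_range.mp hx
    have hb : 0 < b := Nat.lt_of_le_of_lt (Nat.zero_le _) hx'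
    simp only [Function.comp_apply]
    have h1 : a * b + x = b * a + x := by ring
    rw [h1, Nat.mul_add_div hb, Nat.mul_add_mod, Nat.div_eq_of_lt hx',
      Nat.mod_eq_of_lt hx', Nat.add_zero]

lemma J_eq (n : ℕ) : Jword n = (List.range (n * n)).map (fun m => m / n + 1 + (m % n) * n) :=
  range_flatMap_map (fun i j => i + 1 + j * n) n n

lemma len_J (n : ℕ) : (Jword n).length = NN n := by
  rw [J_eq]; simp [NN]

lemma len_U (n : ℕ) : (Uword n).length = 3 * NN n := by
  simp [Uword, len_asc, len_J]
  omega

lemma asc_get (n k : ℕ) (h : k < NN n) : (ascWord n)[k]? = some (k + 1) := by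
  rw [ascWord, List.getElem?_map, List.getElem?_range (by rw [pow_two]; exact h)]
  rfl

lemma J_get (n m : ℕ) (h : m < NN n) : (Jword n)[m]? = some (m / n + 1 + (m % n) * n) := by
  rw [J_eq, List.getElem?_map, List.getElem?_range (show m < n * n from h)]
  rfl

lemma rev_get (n k : ℕ) (h : k < NN n) : ((ascWord n).reverse)[k]? = some (NN n - k) := by
  rw [List.getElem?_reverse (by rw [len_asc]; exact h), len_asc,
    asc_get n _ (by omega)]
  congr 1
  omega

def uletter (n k : ℕ) : ℕ :=
  if k < NN n then k + 1
  else if k < 2 * NN n then (k - NN n) / n + 1 + ((k - NN n) % n) * n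
  else 3 * NN n - k

lemma U_get (n k : ℕ) (hk : k < 3 * NN n) : (Uword n)[k]? = some (uletter n k) := by
  have lA := len_asc n
  have lJ := len_J n
  unfold Uword uletter
  by_cases h1 : k < NN n
  · rw [List.getElem?_append_left (by rw [List.length_append, lA, lJ]; omega),
      List.getElem?_append_left (by rw [lA]; omega), asc_get n k h1, if_pos h1]
  · by_cases h2 : k < 2 * NN n
    · rw [List.getElem?_append_left (by rw [List.length_append, lA, lJ]; omega),
        List.getElem?_append_right (by rw [lA]; omega), lA,
        J_get n _ (by omega), if_neg h1, if_pos h2]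
    · rw [List.getElem?_append_right (by rw [List.length_append, lA, lJ]; omega),
        List.length_append, lA, lJ, rev_get n _ (by omega), if_neg h1, if_neg h2]
      congr 1
      omega

def pos3a (n i : ℕ) : ℕ := NN n + ((i - 1) % n) * n + (i - 1) / n
def pos3b (n c : ℕ) : ℕ := NN n + c * n + (n - 1)

def D (n k i j : ℕ) : Prop :=
  (j = i + 1 ∧ k + 1 = i)
  ∨ (i = NN n ∧ j = 1 ∧ k + 1 = NN n)
  ∨ (j = i + n ∧ k = pos3a n i)
  ∨ (∃ c, i + n = c + 1 + NN n ∧ j = c + 2 ∧ k = pos3b n c)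
  ∨ (i = j + 1 ∧ k = 3 * NN n - i)

lemma pos3a_eval (n c d : ℕ) (hn0 : 0 < n) (hc : c < n) :
    pos3a n (c + 1 + d * n) = NN n + c * n + d := by
  have h1 : c + 1 + d * n = (n * d + c) + 1 := by ring
  rw [pos3a, h1, Nat.add_sub_cancel, Nat.mul_add_mod, Nat.mod_eq_of_lt hc,
    Nat.mul_add_div hn0, Nat.div_eq_of_lt hc, Nat.add_zero]

lemma key (n k i j : ℕ) (hn : 4 ≤ n) (hk : k + 1 < 3 * NN n)
    (hi : uletter n k = i) (hj : uletter n (k + 1) = j) (hij : i ≠ j) :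
    D n k i j := by
  have hn0 : 0 < n := by omega
  have hNN : NN n = n * n := rfl
  have hNn : 4 * n ≤ n * n := Nat.mul_le_mul_right n hn
  have hNN16 : 16 ≤ NN n := by omega
  by_cases h1 : k + 1 < NN n
  · left
    rw [uletter, if_pos (by omega)] at hi
    rw [uletter, if_pos h1] at hj
    omega
  · by_cases h0 : k < NN n
    · -- k + 1 = NN n
      right; left
      rw [uletter, if_pos h0] at hi
      rw [uletter, if_neg h1, if_pos (by omega)] at hj
      have e : k + 1 - NN n = 0 := by omega
      rw [e, Nat.zero_div, Nat.zero_mod, Nat.zero_mul, Nat.add_zero] at hj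
      omega
    · by_cases h2 : k + 1 < 2 * NN n
      · -- both in J region
        rw [uletter, if_neg h0, if_pos (by omega)] at hi
        rw [uletter, if_neg (by omega), if_pos h2] at hj
        have hkm : k + 1 - NN n = (k - NN n) + 1 := by omega
        rw [hkm] at hj
        set m := k - NN n with hm
        have hmlt : m < NN n := by omega
        set c := m / n with hc
        set d := m % n with hd
        have hdn : d < n := Nat.mod_lt _ hn0
        have hcd : n * c + d = m := Nat.div_add_mod m n
        have hcn : c < n := Nat.div_lt_of_lt_mul (by rw [← hNN]; exact hmlt)
        by_cases hdtop : d + 1 < n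
        · -- R3a
          right; right; left
          have e1 : m + 1 = n * c + (d + 1) := by omega
          rw [e1, Nat.mul_add_div hn0, Nat.mul_add_mod, Nat.div_eq_of_lt hdtop,
            Nat.mod_eq_of_lt hdtop, Nat.add_zero] at hj
          have hq : pos3a n (c + 1 + d * n) = NN n + c * n + d := pos3a_eval n c d hn0 hcn
          have hcomm : n * c = c * n := Nat.mul_comm n c
          have hmul : (d + 1) * n = d * n + n := Nat.succ_mul d n
          constructor
          · omega
          · rw [← hi, hq]; omega
        · -- d = n - 1
          have hd1 : d = n - 1 := by omega
          by_cases hctop : c + 1 < n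
          · -- R3b
            right; right; right; left
            have hms : n * (c + 1) = n * c + n := Nat.mul_succ n c
            have e1 : m + 1 = n * (c + 1) + 0 := by omega
            rw [e1, Nat.mul_add_div hn0, Nat.mul_add_mod, Nat.zero_div, Nat.zero_mod,
              Nat.zero_mul, Nat.add_zero, Nat.add_zero] at hj
            refine ⟨c, ?_, ?_, ?_⟩
            · -- i + n = c + 1 + NN n
              have e4 : d * n = (n - 1) * n := by rw [hd1]
              have e3 : (n - 1) * n + n = n * n := by
                have h := Nat.succ_mul (n - 1) n
                have h2 : n - 1 + 1 = n := by omega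
                simp only [Nat.succ_eq_add_one] at h
                rw [h2] at h
                omega
              omega
            · omega
            · have hp : pos3b n c = NN n + c * n + (n - 1) := rfl
              have hcomm : n * c = c * n := Nat.mul_comm n c
              omega
          · -- c = n - 1 : impossible since then k + 1 = 2 * NN n
            exfalso
            have hc1 : c = n - 1 := by omega
            have e3 : n * c = n * (n - 1) := by rw [hc1]
            have e2 : n * (n - 1) + n = n * n := by
              have h := Nat.mul_succ n (n - 1)
              have h2 : n - 1 + 1 = n := by omega
              simp only [Nat.succ_eq_add_one] at h
              rw [h2] at h
              omega
            omega
      · by_cases h3 : k < 2 * NN n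
        · -- k = 2 NN - 1 : i = j = NN n
          exfalso
          rw [uletter, if_neg h0, if_pos h3] at hi
          rw [uletter, if_neg (by omega), if_neg (by omega)] at hj
          have e2 : n * (n - 1) + n = n * n := by
            have h := Nat.mul_succ n (n - 1)
            have h2 : n - 1 + 1 = n := by omega
            simp only [Nat.succ_eq_add_one] at h
            rw [h2] at h
            omega
          have e1 : k - NN n = n * (n - 1) + (n - 1) := by omega
          rw [e1, Nat.mul_add_div hn0, Nat.mul_add_mod,
            Nat.div_eq_of_lt (show n - 1 < n by omega),
            Nat.mod_eq_of_lt (show n - 1 < n by omega), Nat.add_zero] at hi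
          have e3 : (n - 1) * n + n = n * n := by
            have h := Nat.succ_mul (n - 1) n
            have h2 : n - 1 + 1 = n := by omega
            simp only [Nat.succ_eq_add_one] at h
            rw [h2] at h
            omega
          apply hij
          omega
        · -- both in reverse region
          right; right; right; right
          rw [uletter, if_neg (by omega), if_neg (by omega)] at hi
          rw [uletter, if_neg (by omega), if_neg (by omega)] at hj
          omega

lemma key_inj (n : ℕ) (hn : 4 ≤ n) {k k' i j : ℕ}
    (h1 : D n k i j) (h2 : D n k' i j) : k = k' := by
  have hNN : NN n = n * n := rfl
  have hNn : 4 * n ≤ n * n := Nat.mul_le_mul_right n hn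
  obtain h1|h1|h1|⟨c,h1⟩|h1 := h1 <;> obtain h2|h2|h2|⟨c',h2⟩|h2 := h2 <;>
    try omega
  -- remaining : R3b vs R3b
  obtain ⟨t1, t2, t3⟩ := h1
  obtain ⟨t1', t2', t3'⟩ := h2
  have : c = c' := by omega
  subst this
  omega



lemma pl_getElem? {α : Type*} : ∀ (u : List α) (m : ℕ) (p : α × α),
    (pl u)[m]? = some p → u[m]? = some p.1 ∧ u[m + 1]? = some p.2 := by
  intro u
  induction u with
  | nil => intro m p h; simp at h
  | cons a u ih =>
    intro m p h
    cases u with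
    | nil => simp at h
    | cons b t =>
      rw [pl_cons_cons] at h
      cases m with
      | zero =>
        rw [List.getElem?_cons_zero] at h
        obtain rfl := Option.some.inj h
        simp
      | succ m =>
        rw [List.getElem?_cons_succ] at h
        have h2 := ih m p h
        rw [List.getElem?_cons_succ, List.getElem?_cons_succ]
        exact h2

lemma two_le_count_exists {α : Type*} [BEq α] [LawfulBEq α] {l : List α} {v : α}
    (h : 2 ≤ l.count v) : ∃ s t u, l = s ++ v :: t ++ v :: u := by
  induction l with
  | nil => simp at h
  | cons x l ih =>
    rw [List.count_cons] at h
    by_cases hv : v = x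
    · rw [if_pos (show (x == v) = true by simp [hv])] at h
      have hc : 0 < l.count v := by omega
      have hm : v ∈ l := List.count_pos_iff.mp hc
      obtain ⟨s, t, rfl⟩ := List.append_of_mem hm
      exact ⟨[], s, t, by rw [hv]; rfl⟩
    · rw [if_neg (show ¬((x == v) = true) by simp only [beq_iff_eq]; exact fun h' => hv h'.symm)] at h
      obtain ⟨s, t, u, rfl⟩ := ih (by omega)
      exact ⟨x :: s, t, u, rfl⟩

lemma getElem?_append_cons {α : Type*} (s r : List α) (v : α) :
    (s ++ v :: r)[s.length]? = some v := by
  induction s with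
  | nil => simp
  | cons a s ih => simpa using ih

lemma count_le_one_U (n : ℕ) (hn : 4 ≤ n) {i j : ℕ} (hij : i ≠ j) :
    (pl (Uword n)).count (i, j) ≤ 1 := by
  by_contra hcon
  have h2' : 2 ≤ (pl (Uword n)).count (i, j) := by omega
  obtain ⟨s, t, u, hdec⟩ := two_le_count_exists h2'
  have ha' : (pl (Uword n))[s.length]? = some (i, j) := by
    rw [hdec, List.append_assoc, List.cons_append, getElem?_append_cons]
  have hb' : (pl (Uword n))[s.length + 1 + t.length]? = some (i, j) := by
    have hlen : s.length + 1 + t.length = (s ++ (i, j) :: t).length := by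
      simp
      omega
    have hre : s ++ (i, j) :: t ++ (i, j) :: u = (s ++ (i, j) :: t) ++ (i, j) :: u := by
      simp
    rw [hdec, hre, hlen, getElem?_append_cons]
  set a := s.length with hadef
  set b := s.length + 1 + t.length with hbdef
  have hab : a < b := by omega
  obtain ⟨hai, haj⟩ := pl_getElem? _ _ _ ha'
  obtain ⟨hbi, hbj⟩ := pl_getElem? _ _ _ hb'
  have hla : a + 1 < 3 * NN n := by
    obtain ⟨h, -⟩ := List.getElem?_eq_some_iff.mp haj
    rwa [len_U] at h
  have hlb : b + 1 < 3 * NN n := by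
    obtain ⟨h, -⟩ := List.getElem?_eq_some_iff.mp hbj
    rwa [len_U] at h
  have hia : uletter n a = i := by
    rw [U_get n _ (by omega)] at hai; exact Option.some.inj hai
  have hja : uletter n (a + 1) = j := by
    rw [U_get n _ (by omega)] at haj; exact Option.some.inj haj
  have hib : uletter n b = i := by
    rw [U_get n _ (by omega)] at hbi; exact Option.some.inj hbi
  have hjb : uletter n (b + 1) = j := by
    rw [U_get n _ (by omega)] at hbj; exact Option.some.inj hbj
  have d1 := key n a i j hn hla hia hja hij
  have d2 := key n b i j hn hlb hib hjb hij
  have heq := key_inj n hn d1 d2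
  omega

lemma count_U_eq (n : ℕ) {U : List ℕ} (h : SameType U (Uword n)) {i j : ℕ} (hij : i ≠ j) :
    (pl U).count (i, j) = (pl (Uword n)).count (i, j) := by
  obtain ⟨L, hpos, _, hU1, hU2⟩ := h
  have e1 : U = (L.map fun p => (p.1, p.2.1)).flatMap (fun p => List.replicate p.2 p.1) := by
    rw [hU1, List.flatMap_map]
  have e2 : Uword n = (L.map fun p => (p.1, p.2.2)).flatMap (fun p => List.replicate p.2 p.1) := by
    rw [hU2, List.flatMap_map]
  have m1 : (L.map fun p => (p.1, p.2.1)).map Prod.fst = L.map Prod.fst := by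
    rw [List.map_map]; rfl
  have m2 : (L.map fun p => (p.1, p.2.2)).map Prod.fst = L.map Prod.fst := by
    rw [List.map_map]; rfl
  have c1 := count_flat (L.map fun p => (p.1, p.2.1))
    (by intro p hp; obtain ⟨x, hx, rfl⟩ := List.mem_map.mp hp; exact (hpos x hx).1) hij
  have c2 := count_flat (L.map fun p => (p.1, p.2.2))
    (by intro p hp; obtain ⟨x, hx, rfl⟩ := List.mem_map.mp hp; exact (hpos x hx).2) hij
  rw [m1] at c1
  rw [m2] at c2
  rw [← e1] at c1
  rw [← e2] at c2
  rw [c1, c2]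

lemma two_occ {i j : ℕ} (U p q p' q' : List ℕ) (h1 : U = p ++ i :: j :: q)
    (h2 : U = p' ++ i :: j :: q') (hlt : p.length < p'.length)
    (hc : (pl U).count (i, j) ≤ 1) : False := by
  have e2 : pl U = pl (p' ++ [i]) ++ ((i, j) :: pl (j :: q')) := by
    rw [h2, pl_append_cons p' i (j :: q'), pl_cons_cons]
  have hp1 : p ++ [i, j] = U.take (p.length + 2) := by
    rw [h1, List.take_append]
    simp
  have hp2 : p' ++ [i] = U.take (p'.length + 1) := by
    rw [h2, List.take_append]
    simp
  have hpre : p ++ [i, j] <+: p' ++ [i] := by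
    rw [hp1, hp2]
    exact List.take_prefix_take_left (by omega)
  have hx : pl (p ++ [i, j]) = pl (p ++ [i]) ++ [(i, j)] := by
    have h3 := pl_append_cons p i [j]
    simpa using h3
  have hmem : (i, j) ∈ pl (p' ++ [i]) := by
    refine ((pl_prefix hpre).sublist).mem ?_
    rw [hx]
    exact List.mem_append_right _ (List.mem_singleton_self _)
  have h1c : 0 < (pl (p' ++ [i])).count (i, j) := List.count_pos_iff.mpr hmem
  rw [e2, List.count_append, List.count_cons] at hc
  simp at hc
  omega


end P17

/-- (P1) For n > 3, in any word U of the same type as U_n, each two-letter word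
x_i x_j (i ≠ j) appears at most once as a factor of U. -/
theorem stmt17 (n : ℕ) (hn : 3 < n) (U : List ℕ) (hU : SameType U (Uword n))
    (i j : ℕ) (hi : 1 ≤ i) (hi' : i ≤ n ^ 2) (hj : 1 ≤ j) (hj' : j ≤ n ^ 2)
    (hij : i ≠ j) :
    ∀ p q p' q' : List ℕ,
      U = p ++ i :: j :: q → U = p' ++ i :: j :: q' → p = p' := by
  intro p q p' q' h1 h2
  have hn4 : 4 ≤ n := hn
  have hcU : (P17.pl U).count (i, j) ≤ 1 := by
    rw [P17.count_U_eq n hU hij]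
    exact P17.count_le_one_U n hn4 hij
  rcases Nat.lt_trichotomy p.length p'.length with hlt | heq | hgt
  · exact (P17.two_occ U p q p' q' h1 h2 hlt hcU).elim
  · exact List.append_inj_left (h1.symm.trans h2) heq
  · exact (P17.two_occ U p' q' p q h2 h1 hgt hcU).elim
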